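/- Let L/K be a cyclic Galois extension of degree n ≥ 3 of fields of characteristic 0, generated by an element u with uⁿ = q ∈ K, and let σ be a generator of Gal(L/K) with σ(u) = ζ·u for ζ a primitive n-th root of unity in K. Let x = c₀ + c₁u + c₂u² + ··· + c_{n-1}u^{n-1} with cᵢ ∈ K, c₁ ≠ 0, and suppose c₁, ..., c_{n-1} form a geometric sequence. Then there exist a, b, c, d ∈ K with ad − bc ≠ 0 such that σ(x) = (a·x + b)/(c·x + d). That is, σ(x) is a Möbius transformation of x over K. -/

import Mathlib

/-- Proposition 2 of the paper. If `L/K` is a cyclic Galois extension of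
degree `n ≥ 3` generated by `u` with `uⁿ = q ∈ K`, `σ` a generator of the Galois group with
`σ u = ζ u` for `ζ` a primitive `n`-th root of unity in `K`, and
`x = c₀ + c₁ u + ⋯ + c_{n-1} u^{n-1}` with `c₁, …, c_{n-1}` a geometric sequence, then `σ x`
is a Möbius transformation of `x` over `K`. -/
theorem stmt1 {K L : Type*} [Field K] [Field L] [Algebra K L] [CharZero K]
    [IsGalois K L]
    (n : ℕ) (hn : 3 ≤ n) (ζ : K) (hζ : IsPrimitiveRoot ζ n)
    (q : K) (u : L) (hu : u ^ n = algebraMap K L q)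
    (hgen : IntermediateField.adjoin K {u} = ⊤)
    (hdim : Module.finrank K L = n)
    (σ : L ≃ₐ[K] L) (hσu : σ u = algebraMap K L ζ * u)
    (hσgen : ∀ τ : L ≃ₐ[K] L, τ ∈ Subgroup.zpowers σ)
    (c : ℕ → K) (hc1 : c 1 ≠ 0)
    (hgeo : ∀ i, 1 ≤ i → i ≤ n - 2 → c (i + 1) = (c 2 / c 1) * c i)
    (x : L) (hx : x = ∑ i ∈ Finset.range n, algebraMap K L (c i) * u ^ i) :
    ∃ a b cc d : K, a * d - b * cc ≠ 0 ∧
      algebraMap K L cc * x + algebraMap K L d ≠ 0 ∧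
      σ x = (algebraMap K L a * x + algebraMap K L b) /
        (algebraMap K L cc * x + algebraMap K L d) := by
  have hn0 : 0 < n := by omega
  have hfd : FiniteDimensional K L := Module.finite_of_finrank_pos (by omega)
  have hint : IsIntegral K u := IsIntegral.of_finite K u
  have hdeg : (minpoly K u).natDegree = n := by
    rw [← IntermediateField.adjoin.finrank hint]
    rw [show IntermediateField.adjoin K {u} = ⊤ from hgen]
    rw [IntermediateField.finrank_top', hdim]
  -- linear independence of powers of u
  have hLI : ∀ k : ℕ → K, (∑ i ∈ Finset.range n, algebraMap K L (k i) * u ^ i) = 0 →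
      ∀ i, i < n → k i = 0 := by
    intro k hk i hi
    have hli := linearIndependent_pow (K := K) (S := L) u
    rw [hdeg] at hli
    have h2 := Fintype.linearIndependent_iff.mp hli (fun i : Fin n => k i) ?_ ⟨i, hi⟩
    · exact h2
    · rw [← Finset.sum_range (fun j => k j • u ^ j)] at *
      rw [← hk]
      exact Finset.sum_congr rfl fun j _ => by rw [Algebra.smul_def]
  -- nondegeneracy
  have hND : ∀ a b : K, (a ≠ 0 ∨ b ≠ 0) → algebraMap K L a * x + algebraMap K L b ≠ 0 := by
    intro a b hab h0
    have hsum : ∑ i ∈ Finset.range n, algebraMap K L (a * c i + if i = 0 then b else 0) * u ^ i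
        = algebraMap K L a * x + algebraMap K L b := by
      rw [hx, Finset.mul_sum]
      rw [show (algebraMap K L b : L) = ∑ i ∈ Finset.range n, (if i = 0 then algebraMap K L b else 0) by
        rw [Finset.sum_ite_eq' (Finset.range n) 0 (fun _ => algebraMap K L b)]
        simp [Finset.mem_range, hn0]]
      rw [← Finset.sum_add_distrib]
      refine Finset.sum_congr rfl fun j _ => ?_
      by_cases hj : j = 0 <;> simp [hj, map_add, map_mul] <;> ring
    rw [h0] at hsum
    have h1 := hLI _ hsum 1 (by omega)
    have h0' := hLI _ hsum 0 (by omega)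
    simp at h1
    rcases h1 with h1 | h1
    · subst h1; simp at h0'; rcases hab with h | h
      · exact h rfl
      · exact h h0'
    · exact hc1 h1
  set r := c 2 / c 1 with hrdef
  -- geometric coefficients
  have hcoef : ∀ i, 1 ≤ i → i ≤ n - 1 → c i = c 1 * r ^ (i - 1) := by
    intro i h1 h2
    induction i with
    | zero => omega
    | succ j ih =>
      rcases Nat.lt_or_ge j 1 with hj | hj
      · interval_cases j
        · simp
      · have hgj := hgeo j hj (by omega)
        have hpj : r ^ j = r ^ (j - 1) * r := by
          rw [← pow_succ, show j - 1 + 1 = j from by omega]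
        rw [hgj, ih hj (by omega), show j + 1 - 1 = j from by omega, hpj]
        ring
  -- x split into first two terms and the rest
  have hx2 : x = algebraMap K L (c 0) + algebraMap K L (c 1) * u
      + ∑ j ∈ Finset.Ico 2 n, algebraMap K L (c j) * u ^ j := by
    rw [hx, Finset.range_eq_Ico,
      ← Finset.sum_Ico_consecutive _ (by omega : (0:ℕ) ≤ 2) (by omega : 2 ≤ n)]
    congr 1
    rw [show Finset.Ico 0 2 = {0, 1} from rfl]
    simp
  -- the key shifted identity
  have hx3 : algebraMap K L r * u * x = algebraMap K L r * algebraMap K L (c 0) * u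
      + (∑ j ∈ Finset.Ico 2 n, algebraMap K L (c j) * u ^ j)
      + algebraMap K L (c 1) * algebraMap K L (r ^ (n - 1)) * algebraMap K L q := by
    have step1 : algebraMap K L r * u * x
        = ∑ i ∈ Finset.range n, algebraMap K L r * algebraMap K L (c i) * u ^ (i + 1) := by
      rw [hx, Finset.mul_sum]
      exact Finset.sum_congr rfl fun j _ => by rw [pow_succ]; ring
    have step2 := Finset.sum_range_succ
      (fun i => algebraMap K L r * algebraMap K L (c i) * u ^ (i + 1)) (n - 1)
    rw [show n - 1 + 1 = n from by omega] at step2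
    have last : algebraMap K L r * algebraMap K L (c (n - 1)) * u ^ n
        = algebraMap K L (c 1) * algebraMap K L (r ^ (n - 1)) * algebraMap K L q := by
      rw [hcoef (n - 1) (by omega) le_rfl, hu,
        show n - 1 - 1 = n - 2 from by omega, ← map_mul, ← map_mul, ← map_mul, ← map_mul]
      congr 1
      have : r ^ (n - 1) = r ^ (n - 2) * r := by rw [← pow_succ]; congr 1; omega
      rw [this]; ring
    have mid : ∑ i ∈ Finset.range (n - 1), algebraMap K L r * algebraMap K L (c i) * u ^ (i + 1)
        = algebraMap K L r * algebraMap K L (c 0) * u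
          + ∑ j ∈ Finset.Ico 2 n, algebraMap K L (c j) * u ^ j := by
      rw [Finset.range_eq_Ico,
        ← Finset.sum_Ico_consecutive _ (by omega : (0:ℕ) ≤ 1) (by omega : 1 ≤ n - 1)]
      congr 1
      · rw [show Finset.Ico 0 1 = {0} from rfl]; simp
      · rw [Finset.sum_Ico_eq_sum_range, Finset.sum_Ico_eq_sum_range,
          show n - 1 - 1 = n - 2 from by omega, show n - 2 = n - 2 from rfl]
        refine Finset.sum_congr rfl fun k hk => ?_
        rw [Finset.mem_range] at hk
        have h1 : 2 + k = (1 + k) + 1 := by omega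
        rw [h1, hgeo (1 + k) (by omega) (by omega), map_mul]
    rw [step1, step2, mid, last]
  have hI : algebraMap K L r * u * x - x
      = algebraMap K L (c 1) * algebraMap K L (r ^ (n - 1)) * algebraMap K L q
        - algebraMap K L (c 0)
        - (algebraMap K L (c 1) - algebraMap K L (c 0) * algebraMap K L r) * u := by
    linear_combination hx3 - hx2
  have hII := congrArg σ hI
  simp only [map_sub, map_mul, AlgEquiv.commutes, hσu] at hII
  -- r^n * q ≠ 1
  have hQ : r ^ n * q ≠ 1 := by
    by_cases hr0 : r = 0
    · rw [hr0, zero_pow (by omega : n ≠ 0)]; simp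
    · intro h1
      haveI : NeZero n := ⟨by omega⟩
      have hpow1 : (algebraMap K L r * u) ^ n = 1 := by
        rw [mul_pow, ← map_pow, hu, ← map_mul, h1, map_one]
      have hζ' := hζ.map_of_injective (f := algebraMap K L) (algebraMap K L).injective
      obtain ⟨i, hi, hpow⟩ := hζ'.eq_pow_of_pow_eq_one hpow1
      have heq : algebraMap K L r * u = algebraMap K L (ζ ^ i) := by
        rw [← hpow, map_pow]
      have hu2 : u = algebraMap K L (ζ ^ i / r) := by
        have hrne : algebraMap K L r ≠ 0 := by
          simpa using (algebraMap K L).injective.ne hr0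
        field_simp at heq ⊢
        rw [mul_comm] at heq
        rw [map_div₀, eq_div_iff hrne]
        exact heq
      rw [hu2, minpoly.eq_X_sub_C] at hdeg
      simp [Polynomial.natDegree_X_sub_C] at hdeg
      omega
  -- the Möbius data
  have hζ0 : ζ ≠ 0 := hζ.ne_zero (by omega)
  have hζ1 : ζ ≠ 1 := hζ.ne_one (by omega)
  refine ⟨(c 1 * r ^ (n - 1) * q - c 0) * r - ζ * (c 1 - c 0 * r),
    (c 1 * r ^ (n - 1) * q - c 0) * (c 1 - c 0 * r) * (1 - ζ),
    r * (ζ - 1),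
    ζ * r * (c 1 * r ^ (n - 1) * q - c 0) - (c 1 - c 0 * r), ?_, ?_, ?_⟩
  · -- determinant
    have hp : r ^ (n - 1) * r = r ^ n := by
      rw [← pow_succ]; congr 1; omega
    have hdet : ((c 1 * r ^ (n - 1) * q - c 0) * r - ζ * (c 1 - c 0 * r))
          * (ζ * r * (c 1 * r ^ (n - 1) * q - c 0) - (c 1 - c 0 * r))
        - (c 1 * r ^ (n - 1) * q - c 0) * (c 1 - c 0 * r) * (1 - ζ) * (r * (ζ - 1))
        = ζ * (c 1 * (r ^ n * q - 1)) ^ 2 := by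
      rw [← hp]; ring
    rw [hdet]
    exact mul_ne_zero hζ0 (pow_ne_zero 2 (mul_ne_zero hc1 (sub_ne_zero.mpr hQ)))
  · -- denominator nonzero
    refine hND _ _ ?_
    by_cases hr0 : r = 0
    · right
      rw [hr0]
      simpa using hc1
    · exact Or.inl (mul_ne_zero hr0 (sub_ne_zero.mpr hζ1))
  · -- the Möbius identity
    have hden := hND (r * (ζ - 1)) (ζ * r * (c 1 * r ^ (n - 1) * q - c 0) - (c 1 - c 0 * r)) (by
      by_cases hr0 : r = 0
      · right; rw [hr0]; simpa using hc1
      · exact Or.inl (mul_ne_zero hr0 (sub_ne_zero.mpr hζ1)))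
    rw [eq_div_iff hden]
    simp only [map_mul, map_sub, map_add, map_one]
    linear_combination (-(algebraMap K L ζ * algebraMap K L r * σ x
        + algebraMap K L ζ * (algebraMap K L (c 1) - algebraMap K L (c 0) * algebraMap K L r))) * hI
      + (algebraMap K L r * x + (algebraMap K L (c 1) - algebraMap K L (c 0) * algebraMap K L r)) * hII
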